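/- arXiv:1804.05330 — 2 statements merged into one kernel-verified Lean document; each statement's English description precedes it below -/
import Mathlib

section
/- Let h : ℕ → ℕ be strictly increasing with h(i) ≥ 1 and satisfying P_n^(2(n+2)(h(n)+1)^3) < h(n+1) for all n. Then the real number α = Σ_{i=0}^∞ P_i^(-h(i)) is irrational. -/
/-- `P i` is the `i`-th prime number (`P 0 = 2`). -/
noncomputable def P (i : ℕ) : ℕ := Nat.nth Nat.Prime i

lemma two_le_P (i : ℕ) : 2 ≤ P i := (Nat.prime_nth_prime i).two_le

lemma P_mono : Monotone P := (Nat.nth_strictMono Nat.infinite_setOf_prime).monotone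

lemma two_le_P_real (i : ℕ) : (2 : ℝ) ≤ (P i : ℝ) := by exact_mod_cast two_le_P i

section main
variable (h : ℕ → ℕ)

/-- real term -/
noncomputable def gr (i : ℕ) : ℝ := ((P i : ℝ) ^ h i)⁻¹

lemma gr_pos (i : ℕ) : 0 < gr h i := by
  have : (0:ℝ) < (P i : ℝ) ^ h i := pow_pos (lt_of_lt_of_le two_pos (two_le_P_real i)) _
  exact inv_pos.mpr this

lemma gr_le (i : ℕ) : gr h i ≤ (2:ℝ)⁻¹ ^ (h i) := by
  rw [inv_pow]
  apply inv_anti₀ (pow_pos two_pos _)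
  exact pow_le_pow_left₀ (by norm_num) (two_le_P_real i) _

lemma gr_le' (hmono : StrictMono h) (i : ℕ) : gr h i ≤ (2:ℝ)⁻¹ ^ i :=
  (gr_le h i).trans (pow_le_pow_of_le_one (by norm_num) (by norm_num) hmono.le_apply)

lemma gr_summable (hmono : StrictMono h) : Summable (gr h) :=
  Summable.of_nonneg_of_le (fun i => (gr_pos h i).le) (gr_le' h hmono)
    (summable_geometric_of_lt_one (by norm_num) (by norm_num))

lemma h_shift (hmono : StrictMono h) (k i : ℕ) : h k + i ≤ h (i + k) := by
  induction i with
  | zero => simp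
  | succ n ih =>
    have : h (n + k) < h (n + 1 + k) := hmono (by omega)
    omega

lemma tail_pos (hmono : StrictMono h) (k : ℕ) : 0 < ∑' i, gr h (i + k) := by
  refine Summable.tsum_pos ?_ (fun i => (gr_pos h _).le) 0 (gr_pos h _)
  exact ((summable_nat_add_iff k).mpr (gr_summable h hmono))

lemma tail_le (hmono : StrictMono h) (k : ℕ) :
    (∑' i, gr h (i + k)) ≤ 2 * (2:ℝ)⁻¹ ^ (h k) := by
  have hsum : Summable (fun i => gr h (i + k)) :=
    (summable_nat_add_iff k).mpr (gr_summable h hmono)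
  have hgeo : Summable (fun i : ℕ => (2:ℝ)⁻¹ ^ (h k) * (2:ℝ)⁻¹ ^ i) :=
    (summable_geometric_of_lt_one (by norm_num) (by norm_num)).mul_left _
  have hle : ∀ i : ℕ, gr h (i + k) ≤ (2:ℝ)⁻¹ ^ (h k) * (2:ℝ)⁻¹ ^ i := by
    intro i
    have h1 : gr h (i + k) ≤ (2:ℝ)⁻¹ ^ (h (i + k)) := gr_le h _
    have h2 : (2:ℝ)⁻¹ ^ (h (i + k)) ≤ (2:ℝ)⁻¹ ^ (h k + i) :=
      pow_le_pow_of_le_one (by norm_num) (by norm_num) (h_shift h hmono k i)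
    rw [pow_add] at h2
    exact h1.trans h2
  calc (∑' i, gr h (i + k)) ≤ ∑' i : ℕ, (2:ℝ)⁻¹ ^ (h k) * (2:ℝ)⁻¹ ^ i :=
        Summable.tsum_le_tsum hle hsum hgeo
    _ = (2:ℝ)⁻¹ ^ (h k) * (1 - 2⁻¹)⁻¹ := by
        rw [tsum_mul_left, tsum_geometric_of_lt_one (by norm_num) (by norm_num)]
    _ = 2 * (2:ℝ)⁻¹ ^ (h k) := by norm_num; ring

lemma partial_int (n : ℕ) :
    ∃ m : ℕ, ((∏ i ∈ Finset.range (n+1), P i ^ h i : ℕ) : ℝ) *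
      ∑ i ∈ Finset.range (n+1), gr h i = (m : ℝ) := by
  set Q : ℕ := ∏ i ∈ Finset.range (n+1), P i ^ h i with hQ
  refine ⟨∑ i ∈ Finset.range (n+1), Q / P i ^ h i, ?_⟩
  rw [Finset.mul_sum, Nat.cast_sum]
  apply Finset.sum_congr rfl
  intro i hi
  have hdvd : P i ^ h i ∣ Q := Finset.dvd_prod_of_mem _ hi
  have hne : ((P i ^ h i : ℕ) : ℝ) ≠ 0 := by
    have := two_le_P i
    positivity
  rw [Nat.cast_div hdvd hne, div_eq_mul_inv, gr]
  push_cast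
  ring

end main

lemma nat_bound (h : ℕ → ℕ) (hmono : StrictMono h) (hpos : ∀ i, 1 ≤ h i)
    (hgrow : ∀ n, P n ^ (2 * (n + 2) * (h n + 1) ^ 3) < h (n + 1))
    (D n : ℕ) (hDn : D ≤ n) :
    D * (∏ i ∈ Finset.range (n+1), P i ^ h i) * 2 < 2 ^ h (n+1) := by
  set p := P n with hp
  have hp2 : 2 ≤ p := two_le_P n
  set Q : ℕ := ∏ i ∈ Finset.range (n+1), P i ^ h i with hQ
  set A : ℕ := p * (n+1) * h n with hA
  -- Q ≤ 2 ^ A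
  have hQle : Q ≤ 2 ^ A := by
    have h1 : Q ≤ ∏ _i ∈ Finset.range (n+1), p ^ h n := by
      apply Finset.prod_le_prod'
      intro i hi
      rw [Finset.mem_range] at hi
      calc P i ^ h i ≤ p ^ h i := Nat.pow_le_pow_left (P_mono (by omega)) _
        _ ≤ p ^ h n := Nat.pow_le_pow_right (by omega) (hmono.monotone (by omega))
    have h2 : (∏ _i ∈ Finset.range (n+1), p ^ h n) = p ^ ((n+1) * h n) := by
      rw [Finset.prod_const, Finset.card_range, ← pow_mul, Nat.mul_comm]
    have h3 : p ^ ((n+1) * h n) ≤ (2 ^ p) ^ ((n+1) * h n) :=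
      Nat.pow_le_pow_left (Nat.lt_two_pow_self (n := p)).le _
    calc Q ≤ p ^ ((n+1) * h n) := h1.trans_eq h2
      _ ≤ (2 ^ p) ^ ((n+1) * h n) := h3
      _ = 2 ^ A := by rw [← pow_mul, hA]; ring_nf
  have hDle : D ≤ 2 ^ n := (Nat.lt_two_pow_self (n := D)).le.trans (Nat.pow_le_pow_right (by norm_num) hDn)
  have hmain : D * Q * 2 ≤ 2 ^ (n + A + 1) := by
    calc D * Q * 2 ≤ 2 ^ n * 2 ^ A * 2 ^ 1 :=
          Nat.mul_le_mul (Nat.mul_le_mul hDle hQle) (by norm_num)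
      _ = 2 ^ (n + A + 1) := by rw [← pow_add, ← pow_add]
  -- n + A + 1 < h (n+1)
  set E : ℕ := 2 * (n + 2) * (h n + 1) ^ 3 with hE
  have hApow : A ≤ p ^ (n + 2 + h n) := by
    have h1 : n + 1 ≤ p ^ (n + 1) :=
      (Nat.lt_two_pow_self (n := n+1)).le.trans (Nat.pow_le_pow_left hp2 _)
    have h2 : h n ≤ p ^ h n :=
      (Nat.lt_two_pow_self (n := h n)).le.trans (Nat.pow_le_pow_left hp2 _)
    calc A = p * (n+1) * h n := rfl
      _ ≤ p ^ 1 * p ^ (n+1) * p ^ h n :=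
          Nat.mul_le_mul (Nat.mul_le_mul (by rw [pow_one]) h1) h2
      _ = p ^ (n + 2 + h n) := by rw [← pow_add, ← pow_add]; ring_nf
  have hEge : n + 2 + h n + (n + 1) ≤ E := by
    have hx : 1 ≤ h n := hpos n
    have hcube : h n + 1 ≤ (h n + 1) ^ 3 := Nat.le_self_pow (by norm_num) _
    calc n + 2 + h n + (n + 1) ≤ 2 * (n + 2) * (h n + 1) := by nlinarith
      _ ≤ 2 * (n + 2) * (h n + 1) ^ 3 := Nat.mul_le_mul_left _ hcube
  have hXY : p ^ (n + 2 + h n) + p ^ (n + 1) ≤ p ^ E := by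
    have hX2 : 2 ≤ p ^ (n + 2 + h n) := hp2.trans (Nat.le_self_pow (by omega) _)
    have hY2 : 2 ≤ p ^ (n + 1) := hp2.trans (Nat.le_self_pow (by omega) _)
    calc p ^ (n + 2 + h n) + p ^ (n + 1) ≤ p ^ (n + 2 + h n) * p ^ (n + 1) :=
          Nat.add_le_mul hX2 hY2
      _ = p ^ (n + 2 + h n + (n + 1)) := by rw [← pow_add]
      _ ≤ p ^ E := Nat.pow_le_pow_right (by omega) hEge
  have hpn1 : n + 2 ≤ p ^ (n + 1) :=
    (Nat.lt_two_pow_self (n := n+1)).trans_le (Nat.pow_le_pow_left hp2 _)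
  have hg : p ^ E < h (n + 1) := hgrow n
  have hfinal : n + A + 1 < h (n + 1) := by omega
  calc D * Q * 2 ≤ 2 ^ (n + A + 1) := hmain
    _ < 2 ^ h (n+1) := Nat.pow_lt_pow_right (by norm_num) hfinal

theorem alpha_irrational
    (h : ℕ → ℕ) (hmono : StrictMono h) (hpos : ∀ i, 1 ≤ h i)
    (hgrow : ∀ n, P n ^ (2 * (n + 2) * (h n + 1) ^ 3) < h (n + 1)) :
    Irrational (∑' i : ℕ, (P i : ℝ) ^ (-(h i : ℤ))) := by
  have heq : ∀ i : ℕ, (P i : ℝ) ^ (-(h i : ℤ)) = gr h i := by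
    intro i
    rw [gr, zpow_neg, zpow_natCast]
  rw [tsum_congr heq]
  rintro ⟨q, hq⟩
  set D := q.den with hD
  set n := D with hn
  set k := n + 1 with hk
  set Q : ℕ := ∏ i ∈ Finset.range k, P i ^ h i with hQ
  have hsum := gr_summable h hmono
  have hsplit := Summable.sum_add_tsum_nat_add k hsum
  set S : ℝ := ∑ i ∈ Finset.range k, gr h i with hS
  set T : ℝ := ∑' i, gr h (i + k) with hT
  obtain ⟨m, hm⟩ := partial_int h n
  rw [← hQ, ← hS] at hm
  have hTpos : 0 < T := tail_pos h hmono k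
  have hTle : T ≤ 2 * (2:ℝ)⁻¹ ^ (h k) := tail_le h hmono k
  have hQpos : 0 < Q := by
    apply Finset.prod_pos
    intro i _
    exact pow_pos (by have := two_le_P i; omega) _
  have hDpos : 0 < D := q.pos
  -- D * α = q.num
  have hDa : (D : ℝ) * (∑' i, gr h i) = (q.num : ℝ) := by
    rw [← hq, Rat.cast_def]
    field_simp
    ring
  -- the integer z
  set z : ℤ := q.num * Q - D * m with hz
  have hzval : (z : ℝ) = D * Q * T := by
    have h1 : (D : ℝ) * Q * (S + T) = (q.num : ℝ) * Q := by
      rw [hsplit]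
      rw [mul_comm ((D:ℝ)) (Q:ℝ), mul_assoc, hDa]
      ring
    have h2 : (D : ℝ) * Q * S = (D : ℝ) * m := by
      rw [mul_assoc, hm]
    push_cast [hz]
    nlinarith [h1, h2]
  have hzpos : 0 < z := by
    have : (0:ℝ) < (z:ℝ) := by
      rw [hzval]
      positivity
    exact_mod_cast this
  have hzlt : (z : ℝ) < 1 := by
    rw [hzval]
    have hbound := nat_bound h hmono hpos hgrow D n (le_refl D)
    rw [← hQ, ← hk] at hbound
    have hcast : (D : ℝ) * Q * 2 < 2 ^ h k := by exact_mod_cast hbound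
    have h2pow : (0:ℝ) < 2 ^ h k := by positivity
    calc (D:ℝ) * Q * T ≤ (D:ℝ) * Q * (2 * (2:ℝ)⁻¹ ^ (h k)) := by
          apply mul_le_mul_of_nonneg_left hTle
          positivity
      _ = ((D:ℝ) * Q * 2) * (2 ^ h k)⁻¹ := by rw [inv_pow]; ring
      _ < (2 ^ h k) * (2 ^ h k)⁻¹ := by
          apply mul_lt_mul_of_pos_right hcast
          positivity
      _ = 1 := mul_inv_cancel₀ (ne_of_gt h2pow)
  have : (1:ℝ) ≤ (z:ℝ) := by exact_mod_cast hzpos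
  linarith
end

section
/- Let h : ℕ → ℕ be strictly increasing with h(i) ≥ 1, let b ≥ 2 be a base, and suppose P_i does not divide b for some i ≤ j. Then α_j = Σ_{i=0}^j P_i^(-h(i)) does not have a finite base-b expansion, i.e., b^n · α_j is not an integer for any n. -/
lemma P_prime (i : ℕ) : (P i).Prime := Nat.prime_nth_prime i

lemma P_injective : Function.Injective P :=
  (Nat.nth_strictMono Nat.infinite_setOf_prime).injective

lemma padicValRat_sum_nonneg (p : ℕ) [hp : Fact p.Prime] (F : ℕ → ℚ) :
    ∀ s : Finset ℕ, (∀ k ∈ s, 0 < F k) → (∀ k ∈ s, 0 ≤ padicValRat p (F k)) → s.Nonempty →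
    0 ≤ padicValRat p (∑ k ∈ s, F k) := by
  intro s
  induction s using Finset.cons_induction with
  | empty => intro _ _ hs; exact absurd hs (by simp)
  | cons a t ha ih =>
    intro hF hv _
    rw [Finset.sum_cons]
    rcases t.eq_empty_or_nonempty with rfl | ht
    · simpa using hv a (Finset.mem_cons_self _ _)
    · have hFt : 0 < ∑ k ∈ t, F k :=
        Finset.sum_pos (fun k hk => hF k (Finset.mem_cons_of_mem hk)) ht
      have hFa : 0 < F a := hF a (Finset.mem_cons_self a t)
      have h1 : F a + ∑ k ∈ t, F k ≠ 0 := by positivity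
      refine le_trans ?_ (padicValRat.min_le_padicValRat_add h1)
      refine le_min (hv a (Finset.mem_cons_self a t)) ?_
      exact ih (fun k hk => hF k (Finset.mem_cons_of_mem hk))
        (fun k hk => hv k (Finset.mem_cons_of_mem hk)) ht

/-- If some `P i` with `i ≤ j` does not divide the base `b`, then
`α_j = Σ_{i=0}^j P_i^(-h(i))` has no finite base-`b` expansion:
`b^n · α_j` is never an integer. -/
theorem alpha_j_infinite_expansion
    (h : ℕ → ℕ) (hmono : StrictMono h) (hpos : ∀ i, 1 ≤ h i)
    (j b : ℕ) (hb : 2 ≤ b) (i : ℕ) (hij : i ≤ j) (hndvd : ¬ P i ∣ b) :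
    ∀ n : ℕ, ¬ ∃ z : ℤ,
      (b : ℚ) ^ n * (∑ i ∈ Finset.range (j + 1), (P i : ℚ) ^ (-(h i : ℤ))) = z := by
  intro n ⟨z, hz⟩
  set p := P i with hp
  haveI : Fact p.Prime := ⟨P_prime i⟩
  set F : ℕ → ℚ := fun k => (P k : ℚ) ^ (-(h k : ℤ)) with hF
  -- basic facts
  have hPpos : ∀ k, 0 < (P k : ℚ) := fun k => by
    exact_mod_cast (P_prime k).pos
  have hFpos : ∀ k, 0 < F k := fun k => zpow_pos (hPpos k) _
  have hFval : ∀ k, padicValRat p (F k) = -(h k : ℤ) * padicValRat p (P k) := by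
    intro k
    have hne : (P k : ℚ) ≠ 0 := (hPpos k).ne'
    have hFk : F k = ((P k : ℚ) ^ (h k))⁻¹ := by
      simp only [hF, zpow_neg, zpow_natCast]
    rw [hFk, padicValRat.inv, padicValRat.pow (P k : ℚ)]
    push_cast
    ring
  have hvalp : padicValRat p (p : ℚ) = 1 := padicValRat.self (Fact.out : p.Prime).one_lt
  have hvalother : ∀ k, k ≠ i → padicValRat p (P k : ℚ) = 0 := by
    intro k hk
    have : ¬ p ∣ P k := by
      intro hdvd
      have := ((Nat.prime_dvd_prime_iff_eq (P_prime i) (P_prime k)).mp hdvd)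
      exact hk (P_injective this.symm)
    rw [show ((P k : ℚ)) = ((P k : ℤ) : ℚ) by push_cast; ring, padicValRat.of_int,
      padicValInt.eq_zero_of_not_dvd (by exact_mod_cast this)]
    simp
  have hFi : padicValRat p (F i) = -(h i : ℤ) := by
    rw [hFval i, hvalp, mul_one]
  have hFk0 : ∀ k, k ≠ i → padicValRat p (F k) = 0 := fun k hk => by
    rw [hFval k, hvalother k hk, mul_zero]
  -- valuation of the sum is -(h i)
  have hmem : i ∈ Finset.range (j + 1) := Finset.mem_range.mpr (Nat.lt_succ_of_le hij)
  have hsplit : ∑ k ∈ Finset.range (j + 1), F k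
      = F i + ∑ k ∈ (Finset.range (j + 1)).erase i, F k :=
    (Finset.add_sum_erase _ F hmem).symm
  have hvalsum : padicValRat p (∑ k ∈ Finset.range (j + 1), F k) = -(h i : ℤ) := by
    rw [hsplit]
    rcases ((Finset.range (j + 1)).erase i).eq_empty_or_nonempty with he | hne
    · rw [he]; simpa using hFi
    · have hrest : 0 < ∑ k ∈ (Finset.range (j + 1)).erase i, F k :=
        Finset.sum_pos (fun k _ => hFpos k) hne
      have hvrest : 0 ≤ padicValRat p (∑ k ∈ (Finset.range (j + 1)).erase i, F k) :=
        padicValRat_sum_nonneg p F _ (fun k _ => hFpos k)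
          (fun k hk => by rw [hFk0 k (Finset.ne_of_mem_erase hk)]) hne
      have hlt : padicValRat p (F i)
          < padicValRat p (∑ k ∈ (Finset.range (j + 1)).erase i, F k) := by
        rw [hFi]
        refine lt_of_lt_of_le ?_ hvrest
        have := hpos i
        omega
      rw [padicValRat.add_eq_of_lt (by positivity) (hFpos i).ne' hrest.ne' hlt, hFi]
  -- valuation of b
  have hbne : (b : ℚ) ≠ 0 := by positivity
  have hvalb : padicValRat p (b : ℚ) = 0 := by
    rw [show ((b : ℚ)) = ((b : ℤ) : ℚ) by push_cast; ring, padicValRat.of_int,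
      padicValInt.eq_zero_of_not_dvd (by exact_mod_cast hndvd)]
    simp
  have hsumpos : 0 < ∑ k ∈ Finset.range (j + 1), F k :=
    Finset.sum_pos (fun k _ => hFpos k) ⟨i, hmem⟩
  have hlhs : padicValRat p ((b : ℚ) ^ n * ∑ k ∈ Finset.range (j + 1), F k)
      = -(h i : ℤ) := by
    rw [padicValRat.mul (pow_ne_zero n hbne) hsumpos.ne', padicValRat.pow (b : ℚ),
      hvalb, hvalsum, mul_zero, zero_add]
  have hzne : (z : ℚ) ≠ 0 := by
    rw [← hz]; positivity
  have hzval : 0 ≤ padicValRat p (z : ℚ) := by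
    rw [padicValRat.of_int]
    exact_mod_cast Nat.zero_le _
  have hzeq : padicValRat p (z : ℚ) = -(h i : ℤ) := by rw [← hz]; exact hlhs
  have := hpos i
  omega
end
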